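/- Let D be a balanced bipartite digraph with colour classes of cardinality a ≥ 2. If d(u) + d(v) ≥ 3a + 1 for every pair of distinct vertices u, v such that uv ∉ A(D) and vu ∉ A(D), then D contains a hamiltonian cycle (an oriented cycle of length 2a). -/

import Mathlib

namespace BipDigraph

variable {V : Type}

/-- Out-degree of `v` in the digraph `(V, A)`. -/
noncomputable def outdeg (A : V → V → Prop) (v : V) : ℕ := Nat.card {w : V // A v w}

/-- In-degree of `v` in the digraph `(V, A)`. -/
noncomputable def indeg (A : V → V → Prop) (v : V) : ℕ := Nat.card {w : V // A w v}

/-- Degree of `v`: out-degree plus in-degree. -/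
noncomputable def deg (A : V → V → Prop) (v : V) : ℕ := outdeg A v + indeg A v

/-- Out-degree of `v` relative to the vertex set `S`. -/
noncomputable def outdegIn (A : V → V → Prop) (S : Set V) (v : V) : ℕ := Nat.card {w : V // w ∈ S ∧ A v w}

/-- In-degree of `v` relative to the vertex set `S`. -/
noncomputable def indegIn (A : V → V → Prop) (S : Set V) (v : V) : ℕ := Nat.card {w : V // w ∈ S ∧ A w v}

/-- Degree of `v` relative to the vertex set `S`. -/
noncomputable def degIn (A : V → V → Prop) (S : Set V) (v : V) : ℕ := outdegIn A S v + indegIn A S v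

/-- The arc `(u,v)` belongs to the matching given by the function `M` on the class `X`. -/
def InM (X : Finset V) (M : V → V) (u v : V) : Prop := u ∈ X ∧ M u = v

/-- The arc `(u,v)` is an arc of the digraph not belonging to the matching. -/
def NotM (A : V → V → Prop) (X : Finset V) (M : V → V) (u v : V) : Prop :=
  A u v ∧ ¬ InM X M u v

/-- `M` is a complete matching from `X` to `Y`: every `x ∈ X` is matched along an arc
to a vertex of `Y`, and the matching arcs are independent. -/
def CompleteMatching (A : V → V → Prop) (X Y : Finset V) (M : V → V) : Prop :=
  (∀ x ∈ X, M x ∈ Y ∧ A x (M x)) ∧ Set.InjOn M X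

/-- Consecutive arcs of the list alternately satisfy `P` and `Q`, starting with `P`. -/
def Alt (P Q : V → V → Prop) : List V → Prop
  | [] => True
  | [_] => True
  | a :: b :: t => P a b ∧ Alt Q P (b :: t)

/-- `p` is an oriented path in `(V, A)` whose arcs are alternately in the matching `M`
(on `X`) and outside of it. -/
def IsCompatPath (A : V → V → Prop) (X : Finset V) (M : V → V) (p : List V) : Prop :=
  p ≠ [] ∧ p.Nodup ∧ p.Chain' A ∧
    (Alt (InM X M) (NotM A X M) p ∨ Alt (NotM A X M) (InM X M) p)

/-- An `M`-compatible oriented path from `u` to `v`. -/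
def IsCompatPathFromTo (A : V → V → Prop) (X : Finset V) (M : V → V)
    (p : List V) (u v : V) : Prop :=
  IsCompatPath A X M p ∧ p.head? = some u ∧ p.getLast? = some v

/-- `p` lists the vertices of an oriented cycle of `(V, A)` in cyclic order;
its length (number of arcs = number of vertices) is `p.length`. -/
def IsCycle (A : V → V → Prop) (p : List V) : Prop :=
  2 ≤ p.length ∧ p.Nodup ∧ ∃ u, p.head? = some u ∧ List.Chain' A (p ++ [u])

/-- `p` is an oriented cycle whose arcs are alternately in the matching `M` (on `X`)
and outside of it. -/
def IsCompatCycle (A : V → V → Prop) (X : Finset V) (M : V → V) (p : List V) : Prop :=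
  2 ≤ p.length ∧ p.Nodup ∧ ∃ u, p.head? = some u ∧ List.Chain' A (p ++ [u]) ∧
    (Alt (InM X M) (NotM A X M) (p ++ [u]) ∨ Alt (NotM A X M) (InM X M) (p ++ [u]))

/-- The digraph `(V, A)` contains an oriented cycle of length `n`. -/
def HasCycleOfLength (A : V → V → Prop) (n : ℕ) : Prop :=
  ∃ p : List V, IsCycle A p ∧ p.length = n

/-- `(V, A)` is a balanced bipartite digraph with colour classes `X`, `Y` of cardinality `a`. -/
def BalancedBipartite (A : V → V → Prop) (X Y : Finset V) (a : ℕ) : Prop :=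
  X.card = a ∧ Y.card = a ∧ Disjoint X Y ∧ (∀ v : V, v ∈ X ∨ v ∈ Y) ∧
    ∀ u v : V, A u v → (u ∈ X ∧ v ∈ Y) ∨ (u ∈ Y ∧ v ∈ X)

/-- Condition (M): `d(u) + d(v) ≥ 3a + 1` for every pair of distinct vertices `u, v`
with no arc between them in either direction. -/
def CondM (A : V → V → Prop) (a : ℕ) : Prop :=
  ∀ u v : V, u ≠ v → ¬ A u v → ¬ A v u → 3 * a + 1 ≤ deg A u + deg A v

/-- Condition (A): `d(x') + d(y') + d(x'') + d(y'') ≥ 6a + 2` for all pairwise distinct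
`x', x'' ∈ X`, `y', y'' ∈ Y` joined by `M`-compatible paths from `x'` to `y'` and from
`x''` to `y''`. -/
def CondA (A : V → V → Prop) (X Y : Finset V) (M : V → V) (a : ℕ) : Prop :=
  ∀ x' x'' y' y'' : V, x' ∈ X → x'' ∈ X → y' ∈ Y → y'' ∈ Y → x' ≠ x'' → y' ≠ y'' →
    (∃ p, IsCompatPathFromTo A X M p x' y') → (∃ p, IsCompatPathFromTo A X M p x'' y'') →
    6 * a + 2 ≤ deg A x' + deg A y' + deg A x'' + deg A y''

/-- An `M`-compatible cycle all of whose vertices lie in `S`. -/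
def IsCompatCycleIn (A : V → V → Prop) (X : Finset V) (M : V → V) (S : Set V)
    (p : List V) : Prop :=
  IsCompatCycle A X M p ∧ ∀ v ∈ p, v ∈ S

/-- An `M`-compatible path from `u` to `v` all of whose vertices lie in `S`. -/
def IsCompatPathFromToIn (A : V → V → Prop) (X : Finset V) (M : V → V) (S : Set V)
    (p : List V) (u v : V) : Prop :=
  IsCompatPathFromTo A X M p u v ∧ ∀ w ∈ p, w ∈ S

/-- The digraph `(V, A)` is strongly connected. -/
def StronglyConnected (A : V → V → Prop) : Prop :=
  ∀ u v : V, u ≠ v →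
    ∃ p : List V, p.Chain' A ∧ p.head? = some u ∧ p.getLast? = some v


section Proof
set_option linter.unusedSectionVars false
set_option linter.unusedVariables false
set_option maxHeartbeats 1000000
open Finset Equiv Equiv.Perm
attribute [local instance] Classical.propDecidable

variable {V : Type} [Fintype V] [DecidableEq V]
variable {A : V → V → Prop} {X Y : Finset V} {a : ℕ}

lemma natcard_subtype (p : V → Prop) : Nat.card {w : V // p w} = (univ.filter p).card := by
  rw [Nat.card_eq_fintype_card, Fintype.card_subtype]

lemma deg_eq (A : V → V → Prop) (v : V) :
    deg A v = (univ.filter (fun w => A v w)).card + (univ.filter (fun w => A w v)).card := by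
  unfold deg outdeg indeg
  rw [natcard_subtype, natcard_subtype]

lemma no_arc_same_class (harc : ∀ u v, A u v → (u ∈ X ∧ v ∈ Y) ∨ (u ∈ Y ∧ v ∈ X))
    (hdisj : Disjoint X Y) {u v : V} (hu : u ∈ X) (hv : v ∈ X) : ¬ A u v := by
  intro h
  rcases harc u v h with ⟨_, h2⟩ | ⟨h1, _⟩
  · exact Finset.disjoint_left.mp hdisj hv h2
  · exact Finset.disjoint_left.mp hdisj hu h1

lemma out_subset (harc : ∀ u v, A u v → (u ∈ X ∧ v ∈ Y) ∨ (u ∈ Y ∧ v ∈ X))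
    (hdisj : Disjoint X Y) {v : V} (hv : v ∈ X) :
    (univ.filter (fun w => A v w)) ⊆ Y := by
  intro w hw
  rw [mem_filter] at hw
  rcases harc v w hw.2 with ⟨_, h2⟩ | ⟨h1, _⟩
  · exact h2
  · exact absurd hv (Finset.disjoint_left.mp hdisj.symm h1)

lemma in_subset (harc : ∀ u v, A u v → (u ∈ X ∧ v ∈ Y) ∨ (u ∈ Y ∧ v ∈ X))
    (hdisj : Disjoint X Y) {v : V} (hv : v ∈ X) :
    (univ.filter (fun w => A w v)) ⊆ Y := by
  intro w hw
  rw [mem_filter] at hw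
  rcases harc w v hw.2 with ⟨h1, h2⟩ | ⟨h1, h2⟩
  · exact absurd hv (Finset.disjoint_left.mp hdisj.symm h2)
  · exact h1

lemma deg_le_twoa (harc : ∀ u v, A u v → (u ∈ X ∧ v ∈ Y) ∨ (u ∈ Y ∧ v ∈ X))
    (hdisj : Disjoint X Y) (hY : Y.card = a) {v : V} (hv : v ∈ X) : deg A v ≤ 2 * a := by
  rw [deg_eq]
  have h1 := Finset.card_le_card (out_subset harc hdisj hv)
  have h2 := Finset.card_le_card (in_subset harc hdisj hv)
  omega

/-- Hall-type matching lemma: condition (M) gives a matching from `X` into `Y` along arcs. -/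
lemma exists_matching (hX : X.card = a) (hY : Y.card = a) (hdisj : Disjoint X Y)
    (harc : ∀ u v, A u v → (u ∈ X ∧ v ∈ Y) ∨ (u ∈ Y ∧ v ∈ X))
    (ha : 2 ≤ a) (hM : CondM A a) :
    ∃ f : V → V, Set.InjOn f ↑X ∧ ∀ x ∈ X, f x ∈ Y ∧ A x (f x) := by
  classical
  set t : {x : V // x ∈ X} → Finset V := fun x => univ.filter (fun y => A x.1 y) with ht
  have hall : ∀ s : Finset {x : V // x ∈ X}, s.card ≤ (s.biUnion t).card := by
    intro s
    by_contra hlt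
    push_neg at hlt
    set N := s.biUnion t with hN
    set S := s.image Subtype.val with hS
    have hScard : S.card = s.card := Finset.card_image_of_injective _ Subtype.val_injective
    have hSX : S ⊆ X := by
      intro x hx
      rw [hS, mem_image] at hx
      obtain ⟨xs, _, rfl⟩ := hx
      exact xs.2
    have hSa : S.card ≤ a := hX ▸ Finset.card_le_card hSX
    have hNY : N ⊆ Y := by
      intro y hy
      rw [hN, mem_biUnion] at hy
      obtain ⟨x, _, hy⟩ := hy
      rw [ht, mem_filter] at hy
      rcases harc x.1 y hy.2 with ⟨_, h2⟩ | ⟨h1, _⟩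
      · exact h2
      · exact absurd x.2 (Finset.disjoint_left.mp hdisj.symm h1)
    have houtS : ∀ x ∈ S, (univ.filter (fun w => A x w)) ⊆ N := by
      intro x hx w hw
      rw [hS, mem_image] at hx
      obtain ⟨xs, hxs, rfl⟩ := hx
      rw [mem_filter] at hw
      rw [hN, mem_biUnion]
      exact ⟨xs, hxs, by rw [ht, mem_filter]; exact ⟨mem_univ _, hw.2⟩⟩
    -- degree bound for x ∈ S
    have hdegS : ∀ x ∈ S, deg A x ≤ N.card + a := by
      intro x hx
      rw [deg_eq]
      have h1 := Finset.card_le_card (houtS x hx)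
      have h2 := Finset.card_le_card (in_subset harc hdisj (hSX hx))
      omega
    set T := Y \ N with hT
    have hTcard : T.card = a - N.card := by
      rw [hT, Finset.card_sdiff_of_subset hNY, hY]
    have hdegT : ∀ y ∈ T, deg A y ≤ a + (a - S.card) := by
      intro y hy
      rw [hT, mem_sdiff] at hy
      have harc' : ∀ u v, A u v → (u ∈ Y ∧ v ∈ X) ∨ (u ∈ X ∧ v ∈ Y) := fun u v h => (harc u v h).symm
      rw [deg_eq]
      have h1 := Finset.card_le_card (out_subset harc' hdisj.symm hy.1)
      have h2 : (univ.filter (fun w => A w y)) ⊆ X \ S := by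
        intro w hw
        have hw' := hw
        rw [mem_filter] at hw'
        have hwX : w ∈ X := by
          rcases harc w y hw'.2 with ⟨h1', _⟩ | ⟨_, h2'⟩
          · exact h1'
          · exact absurd hy.1 (Finset.disjoint_left.mp hdisj h2')
        rw [mem_sdiff]
        refine ⟨hwX, fun hwS => ?_⟩
        exact hy.2 (houtS w hwS (by rw [mem_filter]; exact ⟨mem_univ _, hw'.2⟩))
      have h2' := Finset.card_le_card h2
      have h3 : (X \ S).card = a - S.card := by rw [Finset.card_sdiff_of_subset hSX, hX]
      rw [h3] at h2'
      rw [hX] at h1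
      omega
    -- now the case analysis; write sc := S.card, nc := N.card
    have hcontra : False := by
      have hnc : N.card < S.card := by omega
      rcases Nat.lt_or_ge S.card 2 with hs1 | hs2
      · -- S.card = 1 (S nonempty since N.card < S.card)
        have hs1' : S.card = 1 := by omega
        obtain ⟨x, hx⟩ := Finset.card_eq_one.mp hs1'
        have hxS : x ∈ S := by rw [hx]; exact mem_singleton_self x
        -- pick x₂ ∈ X \ S
        have : 0 < (X \ S).card := by rw [Finset.card_sdiff_of_subset hSX, hX]; omega
        obtain ⟨x₂, hx₂⟩ := Finset.card_pos.mp this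
        rw [mem_sdiff] at hx₂
        have hne : x ≠ x₂ := fun h => hx₂.2 (h ▸ hxS)
        have h1 := hdegS x hxS
        have h2 := deg_le_twoa harc hdisj hY hx₂.1
        have := hM x x₂ hne (no_arc_same_class harc hdisj (hSX hxS) hx₂.1)
          (no_arc_same_class harc hdisj hx₂.1 (hSX hxS))
        omega
      rcases Nat.lt_or_ge (2 * S.card) (a + 3) with hc2 | hc3
      · -- two vertices in S
        obtain ⟨x₁, hx₁, x₂, hx₂, hne⟩ := Finset.one_lt_card.mp (by omega : 1 < S.card)
        have h1 := hdegS x₁ hx₁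
        have h2 := hdegS x₂ hx₂
        have := hM x₁ x₂ hne (no_arc_same_class harc hdisj (hSX hx₁) (hSX hx₂))
          (no_arc_same_class harc hdisj (hSX hx₂) (hSX hx₁))
        omega
      rcases Nat.lt_or_ge S.card a with hsa | hsa
      · -- two vertices in T
        have harc' : ∀ u v, A u v → (u ∈ Y ∧ v ∈ X) ∨ (u ∈ X ∧ v ∈ Y) := fun u v h => (harc u v h).symm
        obtain ⟨y₁, hy₁, y₂, hy₂, hne⟩ := Finset.one_lt_card.mp (by omega : 1 < T.card)
        have h1 := hdegT y₁ hy₁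
        have h2 := hdegT y₂ hy₂
        have hy₁Y : y₁ ∈ Y := (mem_sdiff.mp hy₁).1
        have hy₂Y : y₂ ∈ Y := (mem_sdiff.mp hy₂).1
        have := hM y₁ y₂ hne (no_arc_same_class harc' hdisj.symm hy₁Y hy₂Y)
          (no_arc_same_class harc' hdisj.symm hy₂Y hy₁Y)
        omega
      · -- S.card = a
        have harc' : ∀ u v, A u v → (u ∈ Y ∧ v ∈ X) ∨ (u ∈ X ∧ v ∈ Y) := fun u v h => (harc u v h).symm
        have hT1 : 0 < T.card := by omega
        obtain ⟨y, hy⟩ := Finset.card_pos.mp hT1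
        have hyY : y ∈ Y := (mem_sdiff.mp hy).1
        have : 0 < (Y.erase y).card := by rw [Finset.card_erase_of_mem hyY, hY]; omega
        obtain ⟨y₂, hy₂⟩ := Finset.card_pos.mp this
        have hy₂Y : y₂ ∈ Y := Finset.mem_of_mem_erase hy₂
        have hne : y ≠ y₂ := fun h => (Finset.ne_of_mem_erase hy₂) h.symm
        have h1 := hdegT y hy
        have h2 := deg_le_twoa harc' hdisj.symm hX hy₂Y
        have := hM y y₂ hne (no_arc_same_class harc' hdisj.symm hyY hy₂Y)
          (no_arc_same_class harc' hdisj.symm hy₂Y hyY)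
        omega
    exact hcontra
  obtain ⟨f, hfinj, hf⟩ := (Finset.all_card_le_biUnion_card_iff_exists_injective t).mp hall
  refine ⟨fun v => if h : v ∈ X then f ⟨v, h⟩ else v, ?_, ?_⟩
  · intro u hu v hv huv
    simp only [Finset.mem_coe] at hu hv
    simp only [dif_pos hu, dif_pos hv] at huv
    exact congrArg Subtype.val (hfinj huv)
  · intro x hx
    simp only [dif_pos hx]
    have := hf ⟨x, hx⟩
    rw [mem_filter] at this
    constructor
    · rcases harc x _ this.2 with ⟨_, h2⟩ | ⟨h1, _⟩
      · exact h2
      · exact absurd hx (Finset.disjoint_left.mp hdisj.symm h1)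
    · exact this.2


/-- The setoid of the same-cycle relation of a permutation. -/
def scSetoid (π : Equiv.Perm V) : Setoid V :=
  ⟨π.SameCycle, ⟨Equiv.Perm.SameCycle.refl π, Equiv.Perm.SameCycle.symm, Equiv.Perm.SameCycle.trans⟩⟩

/-- Number of cycles (orbits) of a permutation. -/
noncomputable def nOrbits (π : Equiv.Perm V) : ℕ := Fintype.card (Quotient (scSetoid π))

lemma swap_merge_sameCycle (π : Equiv.Perm V) {u u' : V} (hne : ¬ π.SameCycle u u') :
    (π * Equiv.swap u u').SameCycle u u' := by
  set π' := π * Equiv.swap u u' with hπ'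
  have key : ∀ j : ℕ, 1 ≤ j → (∀ i, 1 ≤ i → i ≤ j → (π' ^ i) u ≠ u') → (π' ^ j) u = (π ^ j) u' := by
    intro j
    induction j with
    | zero => omega
    | succ j ih =>
      intro _ hno
      rcases Nat.eq_or_lt_of_le (by omega : 1 ≤ j + 1) with h1 | h2
      · -- j + 1 = 1
        have hj0 : j = 0 := by omega
        subst hj0
        simp only [zero_add, pow_one, hπ', Equiv.Perm.mul_apply, Equiv.swap_apply_left]
      · have hj1 : 1 ≤ j := by omega
        have hj := ih hj1 (fun i h1 h2 => hno i h1 (by omega))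
        have hz1 : (π ^ j) u' ≠ u' := by
          rw [← hj]; exact hno j hj1 (by omega)
        have hz2 : (π ^ j) u' ≠ u := by
          intro h
          exact hne (Equiv.Perm.SameCycle.symm ⟨(j : ℤ), by exact_mod_cast h⟩)
        have e1 : (π' ^ (j + 1)) u = π' ((π' ^ j) u) := by
          rw [pow_succ', Equiv.Perm.mul_apply]
        have e2 : (π ^ (j + 1)) u' = π ((π ^ j) u') := by
          rw [pow_succ', Equiv.Perm.mul_apply]
        rw [e1, e2, hj, hπ', Equiv.Perm.mul_apply, Equiv.swap_apply_of_ne_of_ne hz2 hz1]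
  by_contra hnosc
  have hno : ∀ i, 1 ≤ i → i ≤ orderOf π → (π' ^ i) u ≠ u' := by
    intro i _ _ h
    exact hnosc ⟨(i : ℤ), by exact_mod_cast h⟩
  have hN : 1 ≤ orderOf π := orderOf_pos π
  have := key (orderOf π) hN hno
  rw [pow_orderOf_eq_one π] at this
  exact hno (orderOf π) hN le_rfl (by simpa using this)

lemma swap_merge_mono (π : Equiv.Perm V) {u u' : V} (hne : ¬ π.SameCycle u u')
    {v w : V} (h : π.SameCycle v w) : (π * Equiv.swap u u').SameCycle v w := by
  set π' := π * Equiv.swap u u' with hπ'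
  have huu' : π'.SameCycle u u' := swap_merge_sameCycle π hne
  have step : ∀ z : V, π'.SameCycle z (π z) := by
    intro z
    by_cases hz1 : z = u
    · rw [hz1]
      have : π u = π' u' := by
        rw [hπ', Equiv.Perm.mul_apply, Equiv.swap_apply_right]
      rw [this]
      exact huu'.trans ⟨1, by simp⟩
    by_cases hz2 : z = u'
    · rw [hz2]
      have : π u' = π' u := by
        rw [hπ', Equiv.Perm.mul_apply, Equiv.swap_apply_left]
      rw [this]
      exact huu'.symm.trans ⟨1, by simp⟩
    · have : π z = π' z := by
        rw [hπ', Equiv.Perm.mul_apply, Equiv.swap_apply_of_ne_of_ne hz1 hz2]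
      rw [this]
      exact ⟨1, by simp⟩
  obtain ⟨i, -, rfl⟩ := h.exists_pow_eq'
  clear h
  induction i with
  | zero => exact Equiv.Perm.SameCycle.refl _ _
  | succ i ih =>
    have : (π ^ (i + 1)) v = π ((π ^ i) v) := by
      rw [pow_succ', Equiv.Perm.mul_apply]
    rw [this]
    exact ih.trans (step _)

lemma nOrbits_lt (π : Equiv.Perm V) {u u' : V} (hne : ¬ π.SameCycle u u') :
    nOrbits (π * Equiv.swap u u') < nOrbits π := by
  set π' := π * Equiv.swap u u' with hπ'
  have hmono : ∀ v w : V, π.SameCycle v w → π'.SameCycle v w := fun v w h => swap_merge_mono π hne h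
  let F : Quotient (scSetoid π) → Quotient (scSetoid π') :=
    Quotient.map' id (fun v w h => hmono v w h)
  have hsurj : Function.Surjective F := by
    intro q
    induction q using Quotient.inductionOn' with
    | h v => exact ⟨Quotient.mk'' v, rfl⟩
  have hnotinj : ¬ Function.Injective F := by
    intro hinj
    have h1 : F (Quotient.mk'' u) = F (Quotient.mk'' u') := by
      show Quotient.mk'' u = (Quotient.mk'' u' : Quotient (scSetoid π'))
      exact Quotient.sound' (swap_merge_sameCycle π hne)
    have := hinj h1
    exact hne (Quotient.exact' this)
  exact Fintype.card_lt_of_surjective_not_injective F hsurj hnotinj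


/-- The orbit of `v` under the permutation `π`, as a finset. -/
noncomputable def Ob (π : Equiv.Perm V) (v : V) : Finset V :=
  univ.filter (fun w => π.SameCycle v w)

lemma mem_Ob {π : Equiv.Perm V} {v w : V} : w ∈ Ob π v ↔ π.SameCycle v w := by
  simp [Ob]

lemma Ob_closed {π : Equiv.Perm V} {v w : V} : π w ∈ Ob π v ↔ w ∈ Ob π v := by
  simp only [mem_Ob]
  exact Equiv.Perm.sameCycle_apply_right

lemma Ob_closed_compl {π : Equiv.Perm V} {v w : V} :
    π w ∈ (Ob π v)ᶜ ↔ w ∈ (Ob π v)ᶜ := by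
  simp only [Finset.mem_compl]
  exact not_congr Ob_closed

/-- A π-invariant set meets both classes in the same number of vertices. -/
lemma balanced_of_closed (hcov : ∀ v : V, v ∈ X ∨ v ∈ Y)
    (hdisj : Disjoint X Y)
    {π : Equiv.Perm V} (hπ : ∀ v, A v (π v))
    (harc : ∀ u v, A u v → (u ∈ X ∧ v ∈ Y) ∨ (u ∈ Y ∧ v ∈ X))
    {S : Finset V} (hS : ∀ w, π w ∈ S ↔ w ∈ S) :
    (S ∩ X).card = (S ∩ Y).card := by
  have hXY : ∀ w, w ∈ X → π w ∈ Y := by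
    intro w hw
    rcases harc w (π w) (hπ w) with ⟨_, h2⟩ | ⟨h1, _⟩
    · exact h2
    · exact absurd h1 (Finset.disjoint_left.mp hdisj hw)
  have hYX : ∀ w, w ∈ Y → π w ∈ X := by
    intro w hw
    rcases harc w (π w) (hπ w) with ⟨h1, _⟩ | ⟨_, h2⟩
    · exact absurd h1 (Finset.disjoint_left.mp hdisj.symm hw)
    · exact h2
  apply le_antisymm
  · apply Finset.card_le_card_of_injOn π
    · intro w hw
      rw [Finset.mem_coe, mem_inter] at hw ⊢
      exact ⟨(hS w).mpr hw.1, hXY w hw.2⟩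
    · exact fun w₁ _ w₂ _ h => π.injective h
  · apply Finset.card_le_card_of_injOn π
    · intro w hw
      rw [Finset.mem_coe, mem_inter] at hw ⊢
      exact ⟨(hS w).mpr hw.1, hYX w hw.2⟩
    · exact fun w₁ _ w₂ _ h => π.injective h

lemma split_classes (hcov : ∀ v : V, v ∈ X ∨ v ∈ Y) (hdisj : Disjoint X Y) (S : Finset V) :
    S.card = (S ∩ X).card + (S ∩ Y).card := by
  rw [← Finset.card_union_of_disjoint]
  · congr 1
    ext w
    simp only [mem_union, mem_inter]
    constructor
    · intro hw
      rcases hcov w with h | h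
      · exact Or.inl ⟨hw, h⟩
      · exact Or.inr ⟨hw, h⟩
    · rintro (⟨h, _⟩ | ⟨h, _⟩) <;> exact h
  · exact Finset.disjoint_left.mpr fun w hw hw' =>
      Finset.disjoint_left.mp hdisj (mem_inter.mp hw).2 (mem_inter.mp hw').2

/-- Main orbit counting bound: if no pair of distinct orbits can be merged, the total degree of
an orbit `O` is at most `2m(a+m)` where `m = |O ∩ X|`. -/
lemma orbit_deg_sum (hX : X.card = a) (hY : Y.card = a) (hdisj : Disjoint X Y)
    (hcov : ∀ v : V, v ∈ X ∨ v ∈ Y)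
    (harc : ∀ u v, A u v → (u ∈ X ∧ v ∈ Y) ∨ (u ∈ Y ∧ v ∈ X))
    {π : Equiv.Perm V} (hπ : ∀ v, A v (π v))
    (hNM : ∀ u u' : V, ¬ π.SameCycle u u' → ¬ (A u (π u') ∧ A u' (π u)))
    (v₀ : V) :
    ∑ v ∈ Ob π v₀, deg A v ≤ 2 * (Ob π v₀ ∩ X).card * (a + (Ob π v₀ ∩ X).card) := by
  classical
  set O := Ob π v₀ with hO
  set m := (O ∩ X).card with hm
  have hbalO : (O ∩ X).card = (O ∩ Y).card :=
    balanced_of_closed hcov hdisj hπ harc (fun w => Ob_closed)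
  have hbalOc : ((Oᶜ : Finset V) ∩ X).card = ((Oᶜ : Finset V) ∩ Y).card :=
    balanced_of_closed hcov hdisj hπ harc (fun w => Ob_closed_compl)
  set mc := ((Oᶜ : Finset V) ∩ X).card with hmc
  have hma : m + mc = a := by
    have : X = O ∩ X ∪ (Oᶜ : Finset V) ∩ X := by
      ext w; simp only [mem_union, mem_inter, Finset.mem_compl]; tauto
    have hdis : Disjoint (O ∩ X) ((Oᶜ : Finset V) ∩ X) := by
      refine Finset.disjoint_left.mpr fun w hw hw' => ?_
      rw [mem_inter] at hw hw'
      exact (Finset.mem_compl.mp hw'.1) hw.1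
    rw [← hX, this, Finset.card_union_of_disjoint hdis]
  have hOcard : O.card = 2 * m := by
    rw [split_classes hcov hdisj O, ← hbalO]; omega
  -- within-orbit bound
  have hEOO : ∑ v ∈ O, (O.filter (fun w => A v w)).card ≤ 2 * m * m := by
    have hpt : ∀ v ∈ O, (O.filter (fun w => A v w)).card ≤ m := by
      intro v hv
      rcases hcov v with hvX | hvY
      · calc (O.filter (fun w => A v w)).card ≤ (O ∩ Y).card := by
              apply Finset.card_le_card
              intro w hw
              rw [mem_filter] at hw
              rw [mem_inter]
              refine ⟨hw.1, ?_⟩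
              rcases harc v w hw.2 with ⟨_, h2⟩ | ⟨h1, _⟩
              · exact h2
              · exact absurd hvX (Finset.disjoint_left.mp hdisj.symm h1)
          _ = m := hbalO.symm
      · calc (O.filter (fun w => A v w)).card ≤ (O ∩ X).card := by
              apply Finset.card_le_card
              intro w hw
              rw [mem_filter] at hw
              rw [mem_inter]
              refine ⟨hw.1, ?_⟩
              rcases harc v w hw.2 with ⟨h1, _⟩ | ⟨_, h2⟩
              · exact absurd hvY (Finset.disjoint_left.mp hdisj h1)
              · exact h2
          _ = m := rfl
    calc ∑ v ∈ O, (O.filter (fun w => A v w)).card ≤ ∑ v ∈ O, m := Finset.sum_le_sum hpt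
      _ = O.card * m := by rw [Finset.sum_const, smul_eq_mul]
      _ = 2 * m * m := by rw [hOcard]
  -- reindexing along π on the complement
  have hreidx1 : ∀ u : V, ((Oᶜ : Finset V).filter (fun w => A u w)).card
      = ((Oᶜ : Finset V).filter (fun u' => A u (π u'))).card := by
    intro u
    apply Finset.card_bij (fun w _ => π.symm w)
    · intro w hw
      rw [mem_filter] at hw ⊢
      constructor
      · rw [← Ob_closed_compl (π := π) (v := v₀)]
        simpa using hw.1
      · simpa using hw.2
    · intro w₁ hw₁ w₂ hw₂ h
      exact π.symm.injective h
    · intro u' hu'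
      rw [mem_filter] at hu'
      refine ⟨π u', ?_, by simp⟩
      rw [mem_filter]
      exact ⟨Ob_closed_compl.mpr hu'.1, hu'.2⟩
  have hreidx2 : ∀ u' : V, (O.filter (fun w => A u' w)).card
      = (O.filter (fun u => A u' (π u))).card := by
    intro u'
    apply Finset.card_bij (fun w _ => π.symm w)
    · intro w hw
      rw [mem_filter] at hw ⊢
      constructor
      · rw [← Ob_closed (π := π) (v := v₀)]
        simpa using hw.1
      · simpa using hw.2
    · intro w₁ hw₁ w₂ hw₂ h
      exact π.symm.injective h
    · intro u hu
      rw [mem_filter] at hu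
      refine ⟨π u, ?_, by simp⟩
      rw [mem_filter]
      exact ⟨Ob_closed.mpr hu.1, hu.2⟩
  -- the cross bound
  have hcross : ∑ u ∈ O, ((Oᶜ : Finset V).filter (fun w => A u w)).card
      + ∑ u' ∈ (Oᶜ : Finset V), (O.filter (fun w => A u' w)).card ≤ 2 * m * mc := by
    have e1 : ∑ u ∈ O, ((Oᶜ : Finset V).filter (fun w => A u w)).card
        = ∑ u ∈ O, ∑ u' ∈ (Oᶜ : Finset V), (if A u (π u') then 1 else 0) := by
      refine Finset.sum_congr rfl fun u _ => ?_
      rw [hreidx1 u, Finset.card_filter]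
    have e2 : ∑ u' ∈ (Oᶜ : Finset V), (O.filter (fun w => A u' w)).card
        = ∑ u ∈ O, ∑ u' ∈ (Oᶜ : Finset V), (if A u' (π u) then 1 else 0) := by
      rw [Finset.sum_comm]
      refine Finset.sum_congr rfl fun u' _ => ?_
      rw [hreidx2 u', Finset.card_filter]
    rw [e1, e2, ← Finset.sum_add_distrib]
    have hptsum : ∀ u ∈ O, (∑ u' ∈ (Oᶜ : Finset V), (if A u (π u') then 1 else 0))
        + (∑ u' ∈ (Oᶜ : Finset V), (if A u' (π u) then 1 else 0)) ≤ mc := by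
      intro u hu
      rw [← Finset.sum_add_distrib]
      have hpt : ∀ u' ∈ (Oᶜ : Finset V),
          (if A u (π u') then 1 else 0) + (if A u' (π u) then 1 else 0)
          ≤ (if (u' ∈ X ↔ u ∈ X) then 1 else 0) := by
        intro u' hu'
        have hnsc : ¬ π.SameCycle u u' := by
          intro hsc
          exact (Finset.mem_compl.mp hu') (mem_Ob.mpr ((mem_Ob.mp hu).trans hsc))
        have hnm := hNM u u' hnsc
        by_cases hcls : u' ∈ X ↔ u ∈ X
        · rw [if_pos hcls]
          by_cases h1 : A u (π u') <;> by_cases h2 : A u' (π u)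
          · exact absurd ⟨h1, h2⟩ hnm
          all_goals simp [h1, h2]
        · rw [if_neg hcls]
          -- different classes: both arcs impossible
          have harc' : ∀ u v, A u v → (u ∈ Y ∧ v ∈ X) ∨ (u ∈ X ∧ v ∈ Y) :=
            fun u v h => (harc u v h).symm
          have hπX : ∀ w, w ∈ X → π w ∈ Y := by
            intro w hw
            rcases harc w (π w) (hπ w) with ⟨_, h2⟩ | ⟨h1, _⟩
            · exact h2
            · exact absurd h1 (Finset.disjoint_left.mp hdisj hw)
          have hπY : ∀ w, w ∈ Y → π w ∈ X := by
            intro w hw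
            rcases harc w (π w) (hπ w) with ⟨h1, _⟩ | ⟨_, h2⟩
            · exact absurd h1 (Finset.disjoint_left.mp hdisj.symm hw)
            · exact h2
          have h1 : ¬ A u (π u') := by
            intro h
            rcases hcov u with huX | huY
            · have hu'Y : u' ∈ Y := by
                rcases hcov u' with h' | h'
                · exact absurd (Iff.intro (fun _ => huX) (fun _ => h')) hcls
                · exact h'
              exact no_arc_same_class harc hdisj huX (hπY u' hu'Y) h
            · have hu'X : u' ∈ X := by
                rcases hcov u' with h' | h'
                · exact h'
                · exact absurd (Iff.intro
                    (fun hh => absurd hh (Finset.disjoint_left.mp hdisj.symm h'))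
                    (fun hh => absurd hh (Finset.disjoint_left.mp hdisj.symm huY))) hcls
              exact no_arc_same_class harc' hdisj.symm huY (hπX u' hu'X) h
          have h2 : ¬ A u' (π u) := by
            intro h
            rcases hcov u with huX | huY
            · have hu'Y : u' ∈ Y := by
                rcases hcov u' with h' | h'
                · exact absurd (Iff.intro (fun _ => huX) (fun _ => h')) hcls
                · exact h'
              exact no_arc_same_class harc' hdisj.symm hu'Y (hπX u huX) h
            · have hu'X : u' ∈ X := by
                rcases hcov u' with h' | h'
                · exact h'
                · exact absurd (Iff.intro
                    (fun hh => absurd hh (Finset.disjoint_left.mp hdisj.symm h'))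
                    (fun hh => absurd hh (Finset.disjoint_left.mp hdisj.symm huY))) hcls
              exact no_arc_same_class harc hdisj hu'X (hπY u huY) h
          simp [h1, h2]
      calc ∑ u' ∈ (Oᶜ : Finset V), ((if A u (π u') then 1 else 0) + (if A u' (π u) then 1 else 0))
          ≤ ∑ u' ∈ (Oᶜ : Finset V), (if (u' ∈ X ↔ u ∈ X) then 1 else 0) :=
            Finset.sum_le_sum hpt
        _ = ((Oᶜ : Finset V).filter (fun u' => u' ∈ X ↔ u ∈ X)).card :=
            (Finset.card_filter _ _).symm
        _ = mc := by
            rcases hcov u with huX | huY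
            · have : (Oᶜ : Finset V).filter (fun u' => u' ∈ X ↔ u ∈ X)
                  = (Oᶜ : Finset V) ∩ X := by
                ext w
                simp only [mem_filter, mem_inter]
                constructor
                · rintro ⟨h1, h2⟩; exact ⟨h1, h2.mpr huX⟩
                · rintro ⟨h1, h2⟩; exact ⟨h1, ⟨fun _ => huX, fun _ => h2⟩⟩
              rw [this]
            · have : (Oᶜ : Finset V).filter (fun u' => u' ∈ X ↔ u ∈ X)
                  = (Oᶜ : Finset V) ∩ Y := by
                ext w
                simp only [mem_filter, mem_inter]
                constructor
                · rintro ⟨h1, h2⟩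
                  refine ⟨h1, ?_⟩
                  rcases hcov w with h' | h'
                  · exact absurd huY (Finset.disjoint_left.mp hdisj (h2.mp h'))
                  · exact h'
                · rintro ⟨h1, h2⟩
                  refine ⟨h1, ?_⟩
                  constructor
                  · intro hw; exact absurd h2 (Finset.disjoint_left.mp hdisj hw)
                  · intro hu; exact absurd hu (Finset.disjoint_left.mp hdisj.symm huY)
              rw [this, ← hbalOc]
    calc ∑ u ∈ O, ((∑ u' ∈ (Oᶜ : Finset V), (if A u (π u') then 1 else 0))
          + (∑ u' ∈ (Oᶜ : Finset V), (if A u' (π u) then 1 else 0)))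
        ≤ ∑ u ∈ O, mc := Finset.sum_le_sum hptsum
      _ = O.card * mc := by rw [Finset.sum_const, smul_eq_mul]
      _ = 2 * m * mc := by rw [hOcard]
  -- assemble
  have hsplit_out : ∀ v : V, (univ.filter (fun w => A v w)).card
      = (O.filter (fun w => A v w)).card + ((Oᶜ : Finset V).filter (fun w => A v w)).card := by
    intro v
    rw [← Finset.card_union_of_disjoint, ← Finset.filter_union, Finset.union_compl]
    exact Finset.disjoint_filter_filter disjoint_compl_right
  have hin_eq : ∑ v ∈ O, (univ.filter (fun w => A w v)).card
      = ∑ v ∈ O, (O.filter (fun w => A w v)).card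
        + ∑ v ∈ O, ((Oᶜ : Finset V).filter (fun w => A w v)).card := by
    rw [← Finset.sum_add_distrib]
    refine Finset.sum_congr rfl fun v _ => ?_
    rw [← Finset.card_union_of_disjoint, ← Finset.filter_union, Finset.union_compl]
    exact Finset.disjoint_filter_filter disjoint_compl_right
  -- in-sums equal transposed out-sums
  have htrans1 : ∑ v ∈ O, (O.filter (fun w => A w v)).card
      = ∑ v ∈ O, (O.filter (fun w => A v w)).card := by
    have l : ∀ S T : Finset V, ∑ v ∈ S, (T.filter (fun w => A w v)).card
        = ∑ w ∈ T, (S.filter (fun v => A w v)).card := by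
      intro S T
      simp only [Finset.card_filter]
      rw [Finset.sum_comm]
    rw [l O O]
  have htrans2 : ∑ v ∈ O, ((Oᶜ : Finset V).filter (fun w => A w v)).card
      = ∑ u' ∈ (Oᶜ : Finset V), (O.filter (fun w => A u' w)).card := by
    simp only [Finset.card_filter]
    rw [Finset.sum_comm]
  have hdeg : ∑ v ∈ O, deg A v
      = 2 * (∑ v ∈ O, (O.filter (fun w => A v w)).card)
        + (∑ u ∈ O, ((Oᶜ : Finset V).filter (fun w => A u w)).card
          + ∑ u' ∈ (Oᶜ : Finset V), (O.filter (fun w => A u' w)).card) := by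
    have : ∑ v ∈ O, deg A v = ∑ v ∈ O, (univ.filter (fun w => A v w)).card
        + ∑ v ∈ O, (univ.filter (fun w => A w v)).card := by
      rw [← Finset.sum_add_distrib]
      exact Finset.sum_congr rfl fun v _ => deg_eq A v
    rw [this, hin_eq, htrans1, htrans2]
    have : ∑ v ∈ O, (univ.filter (fun w => A v w)).card
        = ∑ v ∈ O, (O.filter (fun w => A v w)).card
          + ∑ v ∈ O, ((Oᶜ : Finset V).filter (fun w => A v w)).card := by
      rw [← Finset.sum_add_distrib]
      exact Finset.sum_congr rfl fun v _ => hsplit_out v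
    rw [this]
    ring
  rw [hdeg]
  calc 2 * (∑ v ∈ O, (O.filter (fun w => A v w)).card)
      + (∑ u ∈ O, ((Oᶜ : Finset V).filter (fun w => A u w)).card
        + ∑ u' ∈ (Oᶜ : Finset V), (O.filter (fun w => A u' w)).card)
      ≤ 2 * (2 * m * m) + 2 * m * mc := by
        have := hEOO
        have := hcross
        omega
    _ ≤ 2 * m * (a + m) := by nlinarith [hma]

/-- Two smallest elements: there are two distinct elements whose value-sum times the card is
at most twice the total sum. -/
lemma two_min_le (Q : Finset V) (d : V → ℕ) (hQ : 2 ≤ Q.card) :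
    ∃ u ∈ Q, ∃ v ∈ Q, u ≠ v ∧ Q.card * (d u + d v) ≤ 2 * ∑ w ∈ Q, d w := by
  obtain ⟨u, huQ, humin⟩ := Finset.exists_min_image Q d (Finset.card_pos.mp (by omega))
  have herase : 1 ≤ (Q.erase u).card := by
    rw [Finset.card_erase_of_mem huQ]; omega
  obtain ⟨v, hvQ', hvmin⟩ := Finset.exists_min_image (Q.erase u) d (Finset.card_pos.mp herase)
  have hvQ : v ∈ Q := Finset.mem_of_mem_erase hvQ'
  have hne : u ≠ v := fun h => Finset.ne_of_mem_erase hvQ' h.symm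
  refine ⟨u, huQ, v, hvQ, hne, ?_⟩
  have hsum : ∑ w ∈ Q, d w = d u + ∑ w ∈ Q.erase u, d w := (Finset.add_sum_erase Q d huQ).symm
  have hlow : (Q.erase u).card * d v ≤ ∑ w ∈ Q.erase u, d w := by
    calc (Q.erase u).card * d v = ∑ _w ∈ Q.erase u, d v := by
          rw [Finset.sum_const, smul_eq_mul]
      _ ≤ ∑ w ∈ Q.erase u, d w := Finset.sum_le_sum fun w hw => hvmin w hw
  have hcard : (Q.erase u).card = Q.card - 1 := Finset.card_erase_of_mem huQ
  have hduv : d u ≤ d v := humin v hvQ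
  have key : Q.card * (d u + d v) ≤ 2 * d u + 2 * ((Q.card - 1) * d v) := by
    have h2 : (Q.card - 2) * d u ≤ (Q.card - 2) * d v := Nat.mul_le_mul_left _ hduv
    have : Q.card * (d u + d v) = Q.card * d u + Q.card * d v := by ring
    rw [this]
    have e1 : Q.card * d u = 2 * d u + (Q.card - 2) * d u := by
      have h : 2 + (Q.card - 2) = Q.card := by omega
      calc Q.card * d u = (2 + (Q.card - 2)) * d u := by rw [h]
        _ = 2 * d u + (Q.card - 2) * d u := by ring
    have e2 : 2 * ((Q.card - 1) * d v) = Q.card * d v + (Q.card - 2) * d v := by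
      have h1 : 2 * (Q.card - 1) = Q.card + (Q.card - 2) := by omega
      calc 2 * ((Q.card - 1) * d v) = (2 * (Q.card - 1)) * d v := by ring
        _ = (Q.card + (Q.card - 2)) * d v := by rw [h1]
        _ = Q.card * d v + (Q.card - 2) * d v := by ring
    omega
  calc Q.card * (d u + d v) ≤ 2 * d u + 2 * ((Q.card - 1) * d v) := key
    _ = 2 * (d u + (Q.card - 1) * d v) := by ring
    _ ≤ 2 * (d u + ∑ w ∈ Q.erase u, d w) := by
        have := hcard ▸ hlow
        omega
    _ = 2 * ∑ w ∈ Q, d w := by rw [← hsum]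

lemma Ob_eq_of_sameCycle {π : Equiv.Perm V} {u v : V} (h : π.SameCycle u v) :
    (Finset.univ.filter (fun w => π.SameCycle u w)) = (Finset.univ.filter (fun w => π.SameCycle v w)) := by
  ext w
  simp only [Finset.mem_filter, Finset.mem_univ, true_and]
  exact ⟨fun h' => h.symm.trans h', fun h' => h.trans h'⟩



lemma sum_split_classes (hcov : ∀ v : V, v ∈ X ∨ v ∈ Y) (hdisj : Disjoint X Y)
    (S : Finset V) (f : V → ℕ) :
    ∑ v ∈ S, f v = ∑ v ∈ S ∩ X, f v + ∑ v ∈ S ∩ Y, f v := by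
  rw [← Finset.sum_union]
  · congr 1
    ext w
    simp only [mem_union, mem_inter]
    constructor
    · intro hw
      rcases hcov w with h | h
      · exact Or.inl ⟨hw, h⟩
      · exact Or.inr ⟨hw, h⟩
    · rintro (⟨h, _⟩ | ⟨h, _⟩) <;> exact h
  · exact Finset.disjoint_left.mpr fun w hw hw' =>
      Finset.disjoint_left.mp hdisj (mem_inter.mp hw).2 (mem_inter.mp hw').2

lemma Ob_eq {π : Equiv.Perm V} {u v : V} (h : π.SameCycle u v) : Ob π u = Ob π v :=
  Ob_eq_of_sameCycle h

lemma mem_Ob_self {π : Equiv.Perm V} (v : V) : v ∈ Ob π v :=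
  mem_Ob.mpr (Equiv.Perm.SameCycle.refl π v)

lemma Ob_disjoint {π : Equiv.Perm V} {u v : V} (h : ¬ π.SameCycle u v) :
    Disjoint (Ob π u) (Ob π v) := by
  refine Finset.disjoint_left.mpr fun w hw hw' => ?_
  exact h ((mem_Ob.mp hw).trans (mem_Ob.mp hw').symm)

lemma pi_mem_Y (hdisj : Disjoint X Y)
    (harc : ∀ u v, A u v → (u ∈ X ∧ v ∈ Y) ∨ (u ∈ Y ∧ v ∈ X))
    {π : Equiv.Perm V} (hπ : ∀ v, A v (π v)) {w : V} (hw : w ∈ X) : π w ∈ Y := by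
  rcases harc w (π w) (hπ w) with ⟨_, h2⟩ | ⟨h1, _⟩
  · exact h2
  · exact absurd h1 (Finset.disjoint_left.mp hdisj hw)

lemma pi_mem_X (hdisj : Disjoint X Y)
    (harc : ∀ u v, A u v → (u ∈ X ∧ v ∈ Y) ∨ (u ∈ Y ∧ v ∈ X))
    {π : Equiv.Perm V} (hπ : ∀ v, A v (π v)) {w : V} (hw : w ∈ Y) : π w ∈ X := by
  rcases harc w (π w) (hπ w) with ⟨h1, _⟩ | ⟨_, h2⟩
  · exact absurd h1 (Finset.disjoint_left.mp hdisj.symm hw)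
  · exact h2

lemma m_pos (hcov : ∀ v : V, v ∈ X ∨ v ∈ Y) (hdisj : Disjoint X Y)
    (harc : ∀ u v, A u v → (u ∈ X ∧ v ∈ Y) ∨ (u ∈ Y ∧ v ∈ X))
    {π : Equiv.Perm V} (hπ : ∀ v, A v (π v)) (v : V) :
    1 ≤ (Ob π v ∩ X).card := by
  rw [Nat.succ_le_iff, Finset.card_pos]
  rcases hcov v with h | h
  · exact ⟨v, mem_inter.mpr ⟨mem_Ob_self v, h⟩⟩
  · exact ⟨π v, mem_inter.mpr ⟨Ob_closed.mpr (mem_Ob_self v), pi_mem_X hdisj harc hπ h⟩⟩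

/-- Claim A: under the no-merge assumption, every orbit either is a 2-cycle or contains
more than half of each colour class. -/
lemma claimA (hX : X.card = a) (hY : Y.card = a) (hdisj : Disjoint X Y)
    (hcov : ∀ v : V, v ∈ X ∨ v ∈ Y)
    (harc : ∀ u v, A u v → (u ∈ X ∧ v ∈ Y) ∨ (u ∈ Y ∧ v ∈ X))
    (hM : CondM A a)
    {π : Equiv.Perm V} (hπ : ∀ v, A v (π v))
    (hNM : ∀ u u' : V, ¬ π.SameCycle u u' → ¬ (A u (π u') ∧ A u' (π u)))
    (v : V) :
    (Ob π v ∩ X).card = 1 ∨ a + 1 ≤ 2 * (Ob π v ∩ X).card := by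
  by_contra hcon
  push_neg at hcon
  obtain ⟨hm1, hma⟩ := hcon
  set O := Ob π v with hO
  set m := (O ∩ X).card with hm
  have hmpos : 1 ≤ m := m_pos hcov hdisj harc hπ v
  have hm2 : 2 ≤ m := by omega
  have hma' : 2 * m ≤ a := by omega
  have hbal : (O ∩ X).card = (O ∩ Y).card :=
    balanced_of_closed hcov hdisj hπ harc (fun w => Ob_closed)
  -- two smallest in each class
  obtain ⟨x₁, hx₁, x₂, hx₂, hxne, hxkey⟩ := two_min_le (O ∩ X) (deg A) hm2
  obtain ⟨y₁, hy₁, y₂, hy₂, hyne, hykey⟩ := two_min_le (O ∩ Y) (deg A) (by omega : 2 ≤ (O ∩ Y).card)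
  have hx₁X : x₁ ∈ X := (mem_inter.mp hx₁).2
  have hx₂X : x₂ ∈ X := (mem_inter.mp hx₂).2
  have hy₁Y : y₁ ∈ Y := (mem_inter.mp hy₁).2
  have hy₂Y : y₂ ∈ Y := (mem_inter.mp hy₂).2
  have harc' : ∀ u v, A u v → (u ∈ Y ∧ v ∈ X) ∨ (u ∈ X ∧ v ∈ Y) := fun u v h => (harc u v h).symm
  have hMx : 3 * a + 1 ≤ deg A x₁ + deg A x₂ :=
    hM x₁ x₂ hxne (no_arc_same_class harc hdisj hx₁X hx₂X)
      (no_arc_same_class harc hdisj hx₂X hx₁X)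
  have hMy : 3 * a + 1 ≤ deg A y₁ + deg A y₂ :=
    hM y₁ y₂ hyne (no_arc_same_class harc' hdisj.symm hy₁Y hy₂Y)
      (no_arc_same_class harc' hdisj.symm hy₂Y hy₁Y)
  have l1 : m * (3 * a + 1) ≤ 2 * ∑ w ∈ O ∩ X, deg A w :=
    le_trans (Nat.mul_le_mul_left m hMx) hxkey
  have l2 : m * (3 * a + 1) ≤ 2 * ∑ w ∈ O ∩ Y, deg A w := by
    refine le_trans (Nat.mul_le_mul_left m hMy) ?_
    rw [hm, hbal]
    exact hykey
  have l4 : ∑ w ∈ O, deg A w = ∑ w ∈ O ∩ X, deg A w + ∑ w ∈ O ∩ Y, deg A w :=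
    sum_split_classes hcov hdisj O (deg A)
  have l3 : ∑ w ∈ O, deg A w ≤ 2 * m * (a + m) :=
    orbit_deg_sum hX hY hdisj hcov harc hπ hNM v
  have h5 : 2 * (m * (3 * a + 1)) ≤ 2 * (m * (2 * (a + m))) := by
    calc 2 * (m * (3 * a + 1)) = m * (3 * a + 1) + m * (3 * a + 1) := by ring
      _ ≤ 2 * ∑ w ∈ O ∩ X, deg A w + 2 * ∑ w ∈ O ∩ Y, deg A w := Nat.add_le_add l1 l2
      _ = 2 * (∑ w ∈ O ∩ X, deg A w + ∑ w ∈ O ∩ Y, deg A w) := by ring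
      _ = 2 * ∑ w ∈ O, deg A w := by rw [← l4]
      _ ≤ 2 * (2 * m * (a + m)) := by omega
      _ = 2 * (m * (2 * (a + m))) := by ring
  have h6 : 3 * a + 1 ≤ 2 * (a + m) :=
    Nat.le_of_mul_le_mul_left (Nat.le_of_mul_le_mul_left h5 (by omega)) (by omega)
  omega

/-- There cannot be two distinct 2-cycle orbits. -/
lemma case2 (hX : X.card = a) (hY : Y.card = a) (hdisj : Disjoint X Y)
    (hcov : ∀ v : V, v ∈ X ∨ v ∈ Y)
    (harc : ∀ u v, A u v → (u ∈ X ∧ v ∈ Y) ∨ (u ∈ Y ∧ v ∈ X))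
    (ha : 2 ≤ a) (hM : CondM A a)
    {π : Equiv.Perm V} (hπ : ∀ v, A v (π v))
    (hNM : ∀ u u' : V, ¬ π.SameCycle u u' → ¬ (A u (π u') ∧ A u' (π u)))
    {u v : V} (hns : ¬ π.SameCycle u v)
    (hu1 : (Ob π u ∩ X).card = 1) (hv1 : (Ob π v ∩ X).card = 1) : False := by
  have hbalu : (Ob π u ∩ X).card = (Ob π u ∩ Y).card :=
    balanced_of_closed hcov hdisj hπ harc (fun w => Ob_closed)
  have hbalv : (Ob π v ∩ X).card = (Ob π v ∩ Y).card :=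
    balanced_of_closed hcov hdisj hπ harc (fun w => Ob_closed)
  obtain ⟨x₁, hx₁⟩ := Finset.card_eq_one.mp hu1
  obtain ⟨y₁, hy₁⟩ := Finset.card_eq_one.mp (hbalu ▸ hu1)
  obtain ⟨x₂, hx₂⟩ := Finset.card_eq_one.mp hv1
  obtain ⟨y₂, hy₂⟩ := Finset.card_eq_one.mp (hbalv ▸ hv1)
  have hsum_u : deg A x₁ + deg A y₁ ≤ 2 * (a + 1) := by
    have hb := orbit_deg_sum hX hY hdisj hcov harc hπ hNM u
    rw [hu1] at hb
    have hsp := sum_split_classes hcov hdisj (Ob π u) (deg A)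
    rw [hx₁, hy₁, Finset.sum_singleton, Finset.sum_singleton] at hsp
    omega
  have hsum_v : deg A x₂ + deg A y₂ ≤ 2 * (a + 1) := by
    have hb := orbit_deg_sum hX hY hdisj hcov harc hπ hNM v
    rw [hv1] at hb
    have hsp := sum_split_classes hcov hdisj (Ob π v) (deg A)
    rw [hx₂, hy₂, Finset.sum_singleton, Finset.sum_singleton] at hsp
    omega
  have hx₁m : x₁ ∈ Ob π u ∩ X := by rw [hx₁]; exact mem_singleton_self x₁
  have hx₂m : x₂ ∈ Ob π v ∩ X := by rw [hx₂]; exact mem_singleton_self x₂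
  have hy₁m : y₁ ∈ Ob π u ∩ Y := by rw [hy₁]; exact mem_singleton_self y₁
  have hy₂m : y₂ ∈ Ob π v ∩ Y := by rw [hy₂]; exact mem_singleton_self y₂
  have hdisjOb := Ob_disjoint hns
  have hxne : x₁ ≠ x₂ := by
    intro h
    exact Finset.disjoint_left.mp hdisjOb (mem_inter.mp hx₁m).1 (h ▸ (mem_inter.mp hx₂m).1)
  have hyne : y₁ ≠ y₂ := by
    intro h
    exact Finset.disjoint_left.mp hdisjOb (mem_inter.mp hy₁m).1 (h ▸ (mem_inter.mp hy₂m).1)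
  have harc' : ∀ u v, A u v → (u ∈ Y ∧ v ∈ X) ∨ (u ∈ X ∧ v ∈ Y) := fun u v h => (harc u v h).symm
  have hMx : 3 * a + 1 ≤ deg A x₁ + deg A x₂ :=
    hM x₁ x₂ hxne (no_arc_same_class harc hdisj (mem_inter.mp hx₁m).2 (mem_inter.mp hx₂m).2)
      (no_arc_same_class harc hdisj (mem_inter.mp hx₂m).2 (mem_inter.mp hx₁m).2)
  have hMy : 3 * a + 1 ≤ deg A y₁ + deg A y₂ :=
    hM y₁ y₂ hyne (no_arc_same_class harc' hdisj.symm (mem_inter.mp hy₁m).2 (mem_inter.mp hy₂m).2)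
      (no_arc_same_class harc' hdisj.symm (mem_inter.mp hy₂m).2 (mem_inter.mp hy₁m).2)
  omega


/-- The tight case: a single 2-cycle plus one big orbit is impossible. -/
lemma final_contra (hX : X.card = a) (hY : Y.card = a) (hdisj : Disjoint X Y)
    (hcov : ∀ v : V, v ∈ X ∨ v ∈ Y)
    (harc : ∀ u v, A u v → (u ∈ X ∧ v ∈ Y) ∨ (u ∈ Y ∧ v ∈ X))
    (ha : 2 ≤ a) (hM : CondM A a)
    {π : Equiv.Perm V} (hπ : ∀ v, A v (π v))
    (hNM : ∀ u u' : V, ¬ π.SameCycle u u' → ¬ (A u (π u') ∧ A u' (π u)))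
    {s b : V} (hs1 : (Ob π s ∩ X).card = 1) (hnsb : ¬ π.SameCycle s b)
    (hpart : ∀ v, π.SameCycle s v ∨ π.SameCycle b v) : False := by
  have harc' : ∀ u v, A u v → (u ∈ Y ∧ v ∈ X) ∨ (u ∈ X ∧ v ∈ Y) := fun u v h => (harc u v h).symm
  have hbals : (Ob π s ∩ X).card = (Ob π s ∩ Y).card :=
    balanced_of_closed hcov hdisj hπ harc (fun w => Ob_closed)
  obtain ⟨x', hx'⟩ := Finset.card_eq_one.mp hs1
  have hx'm : x' ∈ Ob π s ∩ X := by rw [hx']; exact mem_singleton_self x'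
  have hx'X : x' ∈ X := (mem_inter.mp hx'm).2
  have hx'Ob : x' ∈ Ob π s := (mem_inter.mp hx'm).1
  set y' := π x' with hy'
  have hy'Y : y' ∈ Y := pi_mem_Y hdisj harc hπ hx'X
  have hy'Ob : y' ∈ Ob π s := Ob_closed.mpr hx'Ob
  have hObsY : Ob π s ∩ Y = {y'} := by
    obtain ⟨z, hz⟩ := Finset.card_eq_one.mp (hbals ▸ hs1)
    have : y' ∈ ({z} : Finset V) := hz ▸ mem_inter.mpr ⟨hy'Ob, hy'Y⟩
    rw [Finset.mem_singleton] at this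
    rw [hz, this]
  have hπy' : π y' = x' := by
    have h1 : π y' ∈ Ob π s := Ob_closed.mpr hy'Ob
    have h2 : π y' ∈ X := pi_mem_X hdisj harc hπ hy'Y
    have : π y' ∈ Ob π s ∩ X := mem_inter.mpr ⟨h1, h2⟩
    rw [hx', Finset.mem_singleton] at this
    exact this
  set U := Ob π b with hU
  have hdisjU : Disjoint (Ob π s) U := Ob_disjoint hnsb
  set Xu := U ∩ X with hXu
  set Yu := U ∩ Y with hYu
  have hXsplit : ∀ x ∈ X, x = x' ∨ x ∈ Xu := by
    intro x hx
    rcases hpart x with h | h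
    · left
      have : x ∈ Ob π s ∩ X := mem_inter.mpr ⟨mem_Ob.mpr h, hx⟩
      rw [hx', Finset.mem_singleton] at this
      exact this
    · right
      exact mem_inter.mpr ⟨mem_Ob.mpr h, hx⟩
  have hYsplit : ∀ y ∈ Y, y = y' ∨ y ∈ Yu := by
    intro y hy
    rcases hpart y with h | h
    · left
      have : y ∈ Ob π s ∩ Y := mem_inter.mpr ⟨mem_Ob.mpr h, hy⟩
      rw [hObsY, Finset.mem_singleton] at this
      exact this
    · right
      exact mem_inter.mpr ⟨mem_Ob.mpr h, hy⟩
  have hx'nXu : x' ∉ Xu := fun h =>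
    Finset.disjoint_left.mp hdisjU hx'Ob (mem_inter.mp h).1
  have hy'nYu : y' ∉ Yu := fun h =>
    Finset.disjoint_left.mp hdisjU hy'Ob (mem_inter.mp h).1
  have hXeq : X = insert x' Xu := by
    ext w
    simp only [Finset.mem_insert]
    constructor
    · intro hw; exact hXsplit w hw
    · rintro (rfl | hw)
      · exact hx'X
      · exact (mem_inter.mp hw).2
  have hYeq : Y = insert y' Yu := by
    ext w
    simp only [Finset.mem_insert]
    constructor
    · intro hw; exact hYsplit w hw
    · rintro (rfl | hw)
      · exact hy'Y
      · exact (mem_inter.mp hw).2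
  have hXucard : Xu.card = a - 1 := by
    have : X.card = Xu.card + 1 := by
      rw [hXeq, Finset.card_insert_of_notMem hx'nXu]
    omega
  have hYucard : Yu.card = a - 1 := by
    have : Y.card = Yu.card + 1 := by
      rw [hYeq, Finset.card_insert_of_notMem hy'nYu]
    omega
  -- (1) the degree bound on the 2-cycle
  have hxy' : deg A x' + deg A y' ≤ 2 * (a + 1) := by
    have hb := orbit_deg_sum hX hY hdisj hcov harc hπ hNM s
    rw [hs1] at hb
    have hsp := sum_split_classes hcov hdisj (Ob π s) (deg A)
    rw [hx', hObsY, Finset.sum_singleton, Finset.sum_singleton] at hsp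
    omega
  -- (2) degree bound for vertices of the big orbit, X side
  have hdegXu : ∀ x ∈ Xu, deg A x
      ≤ (a - 1) + (a - 1) + ((if A x y' then 1 else 0) + (if A y' x then 1 else 0)) := by
    intro x hx
    have hxX : x ∈ X := (mem_inter.mp hx).2
    have hout : (univ.filter (fun w => A x w)) ⊆ Yu.filter (fun w => A x w) ∪ ({y'} : Finset V).filter (fun w => A x w) := by
      intro w hw
      rw [mem_filter] at hw
      have hwY : w ∈ Y := by
        rcases harc x w hw.2 with ⟨_, h2⟩ | ⟨h1, _⟩
        · exact h2
        · exact absurd h1 (Finset.disjoint_left.mp hdisj hxX)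
      rcases hYsplit w hwY with rfl | hwYu
      · exact Finset.mem_union_right _ (mem_filter.mpr ⟨mem_singleton_self _, hw.2⟩)
      · exact Finset.mem_union_left _ (mem_filter.mpr ⟨hwYu, hw.2⟩)
    have hin : (univ.filter (fun w => A w x)) ⊆ Yu.filter (fun w => A w x) ∪ ({y'} : Finset V).filter (fun w => A w x) := by
      intro w hw
      rw [mem_filter] at hw
      have hwY : w ∈ Y := by
        rcases harc w x hw.2 with ⟨h1, h2⟩ | ⟨h1, _⟩
        · exact absurd h2 (Finset.disjoint_left.mp hdisj hxX)
        · exact h1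
      rcases hYsplit w hwY with rfl | hwYu
      · exact Finset.mem_union_right _ (mem_filter.mpr ⟨mem_singleton_self _, hw.2⟩)
      · exact Finset.mem_union_left _ (mem_filter.mpr ⟨hwYu, hw.2⟩)
    have c1 := Finset.card_le_card hout
    have c2 := Finset.card_le_card hin
    have c3 := Finset.card_union_le (Yu.filter (fun w => A x w)) (({y'} : Finset V).filter (fun w => A x w))
    have c4 := Finset.card_union_le (Yu.filter (fun w => A w x)) (({y'} : Finset V).filter (fun w => A w x))
    have c5 : (Yu.filter (fun w => A x w)).card ≤ a - 1 :=
      hYucard ▸ Finset.card_le_card (Finset.filter_subset _ _)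
    have c6 : (Yu.filter (fun w => A w x)).card ≤ a - 1 :=
      hYucard ▸ Finset.card_le_card (Finset.filter_subset _ _)
    have c7 : (({y'} : Finset V).filter (fun w => A x w)).card = (if A x y' then 1 else 0) := by
      rw [Finset.filter_singleton]
      split <;> simp
    have c8 : (({y'} : Finset V).filter (fun w => A w x)).card = (if A y' x then 1 else 0) := by
      rw [Finset.filter_singleton]
      split <;> simp
    rw [deg_eq]
    omega
  -- (2') degree bound, Y side
  have hdegYu : ∀ y ∈ Yu, deg A y
      ≤ (a - 1) + (a - 1) + ((if A y x' then 1 else 0) + (if A x' y then 1 else 0)) := by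
    intro y hy
    have hyY : y ∈ Y := (mem_inter.mp hy).2
    have hout : (univ.filter (fun w => A y w)) ⊆ Xu.filter (fun w => A y w) ∪ ({x'} : Finset V).filter (fun w => A y w) := by
      intro w hw
      rw [mem_filter] at hw
      have hwX : w ∈ X := by
        rcases harc y w hw.2 with ⟨h1, _⟩ | ⟨_, h2⟩
        · exact absurd h1 (Finset.disjoint_left.mp hdisj.symm hyY)
        · exact h2
      rcases hXsplit w hwX with rfl | hwXu
      · exact Finset.mem_union_right _ (mem_filter.mpr ⟨mem_singleton_self _, hw.2⟩)
      · exact Finset.mem_union_left _ (mem_filter.mpr ⟨hwXu, hw.2⟩)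
    have hin : (univ.filter (fun w => A w y)) ⊆ Xu.filter (fun w => A w y) ∪ ({x'} : Finset V).filter (fun w => A w y) := by
      intro w hw
      rw [mem_filter] at hw
      have hwX : w ∈ X := by
        rcases harc w y hw.2 with ⟨h1, _⟩ | ⟨h1, h2⟩
        · exact h1
        · exact absurd h2 (Finset.disjoint_left.mp hdisj.symm hyY)
      rcases hXsplit w hwX with rfl | hwXu
      · exact Finset.mem_union_right _ (mem_filter.mpr ⟨mem_singleton_self _, hw.2⟩)
      · exact Finset.mem_union_left _ (mem_filter.mpr ⟨hwXu, hw.2⟩)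
    have c1 := Finset.card_le_card hout
    have c2 := Finset.card_le_card hin
    have c3 := Finset.card_union_le (Xu.filter (fun w => A y w)) (({x'} : Finset V).filter (fun w => A y w))
    have c4 := Finset.card_union_le (Xu.filter (fun w => A w y)) (({x'} : Finset V).filter (fun w => A w y))
    have c5 : (Xu.filter (fun w => A y w)).card ≤ a - 1 :=
      hXucard ▸ Finset.card_le_card (Finset.filter_subset _ _)
    have c6 : (Xu.filter (fun w => A w y)).card ≤ a - 1 :=
      hXucard ▸ Finset.card_le_card (Finset.filter_subset _ _)
    have c7 : (({x'} : Finset V).filter (fun w => A y w)).card = (if A y x' then 1 else 0) := by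
      rw [Finset.filter_singleton]
      split <;> simp
    have c8 : (({x'} : Finset V).filter (fun w => A w y)).card = (if A x' y then 1 else 0) := by
      rw [Finset.filter_singleton]
      split <;> simp
    rw [deg_eq]
    omega
  -- (3) condition (M) pairs
  have hpairX : ∀ x ∈ Xu, 3 * a + 1 ≤ deg A x + deg A x' := by
    intro x hx
    have hxX : x ∈ X := (mem_inter.mp hx).2
    have hne : x ≠ x' := by
      intro h
      exact Finset.disjoint_left.mp hdisjU hx'Ob (h ▸ (mem_inter.mp hx).1)
    exact hM x x' hne (no_arc_same_class harc hdisj hxX hx'X)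
      (no_arc_same_class harc hdisj hx'X hxX)
  have hpairY : ∀ y ∈ Yu, 3 * a + 1 ≤ deg A y + deg A y' := by
    intro y hy
    have hyY : y ∈ Y := (mem_inter.mp hy).2
    have hne : y ≠ y' := by
      intro h
      exact Finset.disjoint_left.mp hdisjU hy'Ob (h ▸ (mem_inter.mp hy).1)
    exact hM y y' hne (no_arc_same_class harc' hdisj.symm hyY hy'Y)
      (no_arc_same_class harc' hdisj.symm hy'Y hyY)
  -- nonempties
  have hXune : Xu.Nonempty := Finset.card_pos.mp (by omega)
  have hYune : Yu.Nonempty := Finset.card_pos.mp (by omega)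
  obtain ⟨x₀, hx₀⟩ := hXune
  obtain ⟨y₀, hy₀⟩ := hYune
  -- (4) pin down degrees of x', y'
  have hIx : ∀ (p q : Prop), (if p then 1 else 0) + (if q then 1 else 0) ≤ 2 := by
    intro p q
    split <;> split <;> omega
  have hdx' : a + 1 ≤ deg A x' := by
    have h1 := hdegXu x₀ hx₀
    have h2 := hpairX x₀ hx₀
    have h3 := hIx (A x₀ y') (A y' x₀)
    omega
  have hdy' : a + 1 ≤ deg A y' := by
    have h1 := hdegYu y₀ hy₀
    have h2 := hpairY y₀ hy₀
    have h3 := hIx (A y₀ x') (A x' y₀)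
    omega
  have hdx'e : deg A x' = a + 1 := by omega
  have hdy'e : deg A y' = a + 1 := by omega
  -- (5) all arcs between Xu and y', Yu and x'
  have harcX : ∀ x ∈ Xu, A x y' ∧ A y' x := by
    intro x hx
    have h1 := hdegXu x hx
    have h2 := hpairX x hx
    rw [hdx'e] at h2
    by_cases hA1 : A x y' <;> by_cases hA2 : A y' x
    · exact ⟨hA1, hA2⟩
    · rw [if_pos hA1, if_neg hA2] at h1; omega
    · rw [if_neg hA1, if_pos hA2] at h1; omega
    · rw [if_neg hA1, if_neg hA2] at h1; omega
  have harcY : ∀ y ∈ Yu, A y x' ∧ A x' y := by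
    intro y hy
    have h1 := hdegYu y hy
    have h2 := hpairY y hy
    rw [hdy'e] at h2
    by_cases hA1 : A y x' <;> by_cases hA2 : A x' y
    · exact ⟨hA1, hA2⟩
    · rw [if_pos hA1, if_neg hA2] at h1; omega
    · rw [if_neg hA1, if_pos hA2] at h1; omega
    · rw [if_neg hA1, if_neg hA2] at h1; omega
  -- (6) merge x₀ with x': contradiction
  have hx₀U : x₀ ∈ U := (mem_inter.mp hx₀).1
  have hx₀X : x₀ ∈ X := (mem_inter.mp hx₀).2
  have hπx₀Yu : π x₀ ∈ Yu :=
    mem_inter.mpr ⟨Ob_closed.mpr hx₀U, pi_mem_Y hdisj harc hπ hx₀X⟩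
  have hnsc : ¬ π.SameCycle x₀ x' := by
    intro h
    have h1 : π.SameCycle b x₀ := mem_Ob.mp hx₀U
    have h2 : π.SameCycle s x' := mem_Ob.mp hx'Ob
    exact hnsb (h2.trans (h.symm.trans h1.symm))
  exact hNM x₀ x' hnsc ⟨by rw [← hy']; exact (harcX x₀ hx₀).1, (harcY (π x₀) hπx₀Yu).2⟩

/-- Minimality of the number of orbits forces a single cycle. -/
lemma all_same_cycle (hX : X.card = a) (hY : Y.card = a) (hdisj : Disjoint X Y)
    (hcov : ∀ v : V, v ∈ X ∨ v ∈ Y)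
    (harc : ∀ u v, A u v → (u ∈ X ∧ v ∈ Y) ∨ (u ∈ Y ∧ v ∈ X))
    (ha : 2 ≤ a) (hM : CondM A a)
    {π : Equiv.Perm V} (hπ : ∀ v, A v (π v))
    (hNM : ∀ u u' : V, ¬ π.SameCycle u u' → ¬ (A u (π u') ∧ A u' (π u))) :
    ∀ u u' : V, π.SameCycle u u' := by
  by_contra hcon
  push_neg at hcon
  obtain ⟨u₀, u₁, hns⟩ := hcon
  have hCA := claimA hX hY hdisj hcov harc hM hπ hNM
  have hC : ∀ w w' : V, ¬ π.SameCycle w w' →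
      (Ob π w ∩ X).card + (Ob π w' ∩ X).card ≤ a := by
    intro w w' h
    have hdj : Disjoint (Ob π w ∩ X) (Ob π w' ∩ X) :=
      (Ob_disjoint h).mono Finset.inter_subset_left Finset.inter_subset_left
    calc (Ob π w ∩ X).card + (Ob π w' ∩ X).card
        = ((Ob π w ∩ X) ∪ (Ob π w' ∩ X)).card := (Finset.card_union_of_disjoint hdj).symm
      _ ≤ X.card := Finset.card_le_card
          (Finset.union_subset Finset.inter_subset_right Finset.inter_subset_right)
      _ = a := hX
  have hfinal : ∀ s b : V, ¬ π.SameCycle s b → (Ob π s ∩ X).card = 1 →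
      a + 1 ≤ 2 * (Ob π b ∩ X).card → False := by
    intro s b hnsb hs1 hbig
    have hpart : ∀ v, π.SameCycle s v ∨ π.SameCycle b v := by
      intro v
      by_contra hv
      push_neg at hv
      obtain ⟨hv1, hv2⟩ := hv
      have hv1' : ¬ π.SameCycle s v := hv1
      have hv2' : ¬ π.SameCycle b v := hv2
      rcases hCA v with h | h
      · exact case2 hX hY hdisj hcov harc ha hM hπ hNM hv1' hs1 h
      · have := hC b v hv2'
        omega
    exact final_contra hX hY hdisj hcov harc ha hM hπ hNM hs1 hnsb hpart
  rcases hCA u₀ with h0 | h0 <;> rcases hCA u₁ with h1 | h1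
  · exact case2 hX hY hdisj hcov harc ha hM hπ hNM hns h0 h1
  · exact hfinal u₀ u₁ hns h0 h1
  · have hns' : ¬ π.SameCycle u₁ u₀ := fun h => hns h.symm
    exact hfinal u₁ u₀ hns' h1 h0
  · have := hC u₀ u₁ hns
    omega

end Proof

/-- Main Theorem: a balanced bipartite digraph with colour classes of
cardinality `a ≥ 2` satisfying condition (M) contains a hamiltonian cycle
(an oriented cycle of length `2a`). -/
theorem stmt8 {V : Type} [Fintype V] [DecidableEq V] (A : V → V → Prop)
    (X Y : Finset V) (a : ℕ) (ha : 2 ≤ a)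
    (hbb : BalancedBipartite A X Y a) (hM : CondM A a) :
    HasCycleOfLength A (2 * a) := by
  classical
  obtain ⟨hX, hY, hdisj, hcov, harc⟩ := hbb
  have harc' : ∀ u v, A u v → (u ∈ Y ∧ v ∈ X) ∨ (u ∈ X ∧ v ∈ Y) := fun u v h => (harc u v h).symm
  have hcov' : ∀ v : V, v ∈ Y ∨ v ∈ X := fun v => (hcov v).symm
  -- matchings in both directions
  obtain ⟨f, hfinj, hf⟩ := exists_matching hX hY hdisj harc ha hM
  obtain ⟨g, hginj, hg⟩ := exists_matching hY hX hdisj.symm harc' ha hM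
  -- combine into a permutation
  set h : V → V := fun v => if v ∈ X then f v else g v with hh
  have hhV : ∀ v, A v (h v) := by
    intro v
    by_cases hv : v ∈ X
    · rw [hh]; simp only [if_pos hv]; exact (hf v hv).2
    · rw [hh]; simp only [if_neg hv]
      rcases hcov v with h' | h'
      · exact absurd h' hv
      · exact (hg v h').2
  have hinj : Function.Injective h := by
    intro u v huv
    rw [hh] at huv
    by_cases hu : u ∈ X <;> by_cases hv : v ∈ X
    · simp only [if_pos hu, if_pos hv] at huv
      exact hfinj hu hv huv
    · simp only [if_pos hu, if_neg hv] at huv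
      have h1 : f u ∈ Y := (hf u hu).1
      have hvY : v ∈ Y := (hcov v).resolve_left hv
      have h2 : g v ∈ X := (hg v hvY).1
      rw [huv] at h1
      exact absurd h1 (Finset.disjoint_left.mp hdisj h2)
    · simp only [if_neg hu, if_pos hv] at huv
      have h1 : f v ∈ Y := (hf v hv).1
      have huY : u ∈ Y := (hcov u).resolve_left hu
      have h2 : g u ∈ X := (hg u huY).1
      rw [← huv] at h1
      exact absurd h1 (Finset.disjoint_left.mp hdisj h2)
    · simp only [if_neg hu, if_neg hv] at huv
      have huY : u ∈ Y := (hcov u).resolve_left hu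
      have hvY : v ∈ Y := (hcov v).resolve_left hv
      exact hginj huY hvY huv
  have hbij : Function.Bijective h := (Finite.injective_iff_bijective).mp hinj
  set πw : Equiv.Perm V := Equiv.ofBijective h hbij with hπw
  have hπwA : ∀ v, A v (πw v) := fun v => hhV v
  -- choose a permutation minimizing the number of orbits
  set P : Equiv.Perm V → Prop := fun π => ∀ v, A v (π v) with hP
  have hPne : (Finset.univ.filter P).Nonempty := ⟨πw, Finset.mem_filter.mpr ⟨Finset.mem_univ _, hπwA⟩⟩
  obtain ⟨π₀, hπ₀mem, hπ₀min⟩ := Finset.exists_min_image (Finset.univ.filter P) nOrbits hPne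
  have hπ₀ : ∀ v, A v (π₀ v) := (Finset.mem_filter.mp hπ₀mem).2
  -- no merging is possible
  have hNM : ∀ u u' : V, ¬ π₀.SameCycle u u' → ¬ (A u (π₀ u') ∧ A u' (π₀ u)) := by
    rintro u u' hnsc ⟨h1, h2⟩
    have hne : u ≠ u' := fun h => hnsc (h ▸ Equiv.Perm.SameCycle.refl π₀ u)
    have hP' : P (π₀ * Equiv.swap u u') := by
      intro v
      rw [Equiv.Perm.mul_apply]
      by_cases hv1 : v = u
      · rw [hv1, Equiv.swap_apply_left]; exact h1
      by_cases hv2 : v = u'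
      · rw [hv2, Equiv.swap_apply_right]; exact h2
      · rw [Equiv.swap_apply_of_ne_of_ne hv1 hv2]; exact hπ₀ v
    have hlt := nOrbits_lt π₀ hnsc
    have hge := hπ₀min (π₀ * Equiv.swap u u') (Finset.mem_filter.mpr ⟨Finset.mem_univ _, hP'⟩)
    omega
  -- a single cycle
  have hsc : ∀ u u' : V, π₀.SameCycle u u' :=
    all_same_cycle hX hY hdisj hcov harc ha hM hπ₀ hNM
  -- the number of vertices
  have hcardV : Fintype.card V = 2 * a := by
    have huniv : (Finset.univ : Finset V) = X ∪ Y := by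
      ext v
      simp only [Finset.mem_univ, Finset.mem_union, true_iff]
      exact hcov v
    rw [← Finset.card_univ, huniv, Finset.card_union_of_disjoint hdisj, hX, hY]
    omega
  -- base point
  have hXne : X.Nonempty := Finset.card_pos.mp (by omega)
  obtain ⟨v₀, hv₀⟩ := hXne
  -- minimal period is 2a
  set c := Function.minimalPeriod (π₀ : V → V) v₀ with hc
  have hper : v₀ ∈ Function.periodicPts (π₀ : V → V) := by
    rw [Function.mem_periodicPts]
    refine ⟨orderOf π₀, orderOf_pos π₀, ?_⟩
    show (π₀ : V → V)^[orderOf π₀] v₀ = v₀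
    rw [Equiv.Perm.iterate_eq_pow, pow_orderOf_eq_one]
    rfl
  have hcpos : 0 < c := Function.minimalPeriod_pos_of_mem_periodicPts hper
  have hinjOn := Function.iterate_injOn_Iio_minimalPeriod (f := (π₀ : V → V)) (x := v₀)
  set S : Finset V := (Finset.range c).image (fun i => (π₀ : V → V)^[i] v₀) with hS
  have hScard : S.card = c := by
    rw [hS, Finset.card_image_of_injOn, Finset.card_range]
    intro i hi j hj hij
    exact hinjOn (by simpa using Finset.mem_range.mp hi) (by simpa using Finset.mem_range.mp hj) hij
  have hSuniv : S = Finset.univ := by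
    apply Finset.eq_univ_of_forall
    intro w
    obtain ⟨i, -, hiw⟩ := (hsc v₀ w).exists_pow_eq'
    rw [hS, Finset.mem_image]
    refine ⟨i % c, Finset.mem_range.mpr (Nat.mod_lt i hcpos), ?_⟩
    rw [Function.iterate_mod_minimalPeriod_eq]
    rw [Equiv.Perm.iterate_eq_pow]
    exact hiw
  have hceq : c = 2 * a := by
    have : S.card = Fintype.card V := by rw [hSuniv, Finset.card_univ]
    omega
  -- construct the hamiltonian cycle
  refine ⟨(List.range (2 * a)).map (fun i => (π₀ : V → V)^[i] v₀), ?_, by simp⟩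
  have hf2a : (π₀ : V → V)^[2 * a] v₀ = v₀ := by
    rw [← hceq]
    exact Function.iterate_minimalPeriod
  refine ⟨?_, ?_, v₀, ?_, ?_⟩
  · simp only [List.length_map, List.length_range]
    omega
  · refine List.Nodup.map_on ?_ List.nodup_range
    intro i hi j hj hij
    rw [List.mem_range] at hi hj
    exact hinjOn (by rw [Set.mem_Iio, ← hc]; omega) (by rw [Set.mem_Iio, ← hc]; omega) hij
  · obtain ⟨n, hn⟩ : ∃ n, 2 * a = n + 1 := ⟨2 * a - 1, by omega⟩
    rw [hn, List.range_succ_eq_map]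
    simp
  · have hsplit : (List.range (2 * a)).map (fun i => (π₀ : V → V)^[i] v₀) ++ [v₀]
        = (List.range (2 * a + 1)).map (fun i => (π₀ : V → V)^[i] v₀) := by
      rw [List.range_succ, List.map_append]
      simp only [List.map_cons, List.map_nil]
      rw [hf2a]
    rw [hsplit]
    show List.IsChain A _
    rw [List.isChain_map]
    rw [List.isChain_range_succ]
    intro m hm
    rw [Function.iterate_succ_apply']
    exact hπ₀ _

end BipDigraph
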